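/- Let m,n ≥ 3 and let Λ be the m×n torus lattice. Let G' be the subgroup of ({−1,+1}^E, componentwise multiplication) generated by the plaquette-flip elements {x^p : p ∈ F}, acting on Ω_8vx = {σ ∈ {−1,+1}^E : ∏_{e∼s} σ_e = +1 for all s ∈ V} by componentwise multiplication. Then this action has exactly four orbits, and each orbit has cardinality 2^{mn−1}. -/

import Mathlib

open scoped BigOperators

namespace Toric

/-- Vertices of the `m × n` torus lattice. Faces are also indexed by `Vtx`
(the face `p` is the unit square whose lower-left corner is `p`). -/
abbrev Vtx (m n : ℕ) := ZMod m × ZMod n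

/-- Edges of the torus: `(s, true)` is the horizontal edge from `s` to its right
neighbour, `(s, false)` the vertical edge from `s` to its upper neighbour. -/
abbrev Edge (m n : ℕ) := Vtx m n × Bool

variable (m n : ℕ)

/-- The four edges incident to the vertex `s`, in a fixed order:
right, up, left, down. -/
def star (s : Vtx m n) : Fin 4 → Edge m n :=
  ![(s, true), (s, false), ((s.1 - 1, s.2), true), ((s.1, s.2 - 1), false)]

/-- The four edges bounding the face `p`, in a fixed order:
bottom, left, top, right. -/
def faceEdge (p : Vtx m n) : Fin 4 → Edge m n :=
  ![(p, true), (p, false), ((p.1, p.2 + 1), true), ((p.1 + 1, p.2), false)]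

/-- The set of the four edges incident to the vertex `s` (written `e ∼ s`). -/
def starSet (s : Vtx m n) : Finset (Edge m n) := Finset.univ.image (star m n s)

/-- The set of the four edges bounding the face `p` (written `e ∼ p`). -/
def faceSet (p : Vtx m n) : Finset (Edge m n) := Finset.univ.image (faceEdge m n p)

/-- Arrow configurations: each edge points right/up (`true`) or left/down (`false`). -/
abbrev AConf (m n : ℕ) := Edge m n → Bool

/-- Which of the four edges at `s` are incoming (point towards `s`). -/
def incVec (d : AConf m n) (s : Vtx m n) : Fin 4 → Bool :=
  ![!d (star m n s 0), !d (star m n s 1), d (star m n s 2), d (star m n s 3)]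

/-- Eight-vertex condition: every vertex has an even number of incoming arrows. -/
def IsEightVertex (d : AConf m n) : Prop :=
  ∀ s : Vtx m n, Even (Finset.univ.filter (fun i => incVec m n d s i = true)).card

/-- A local vertex type `η : Fin 4 → Bool` (arrow directions of the four incident
edges, in the order right, up, left, down) is one of the eight allowed vertex types
I–VIII iff the number of incoming arrows is even. -/
def IsVertexType (η : Fin 4 → Bool) : Prop :=
  Even (Finset.univ.filter
    (fun i => (![!η 0, !η 1, η 2, η 3] : Fin 4 → Bool) i = true)).card

/-- The event `A^η_C` that every vertex of `C` exhibits the type `η` or its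
total reversal. -/
def EventA (η : Fin 4 → Bool) (C : Finset (Vtx m n)) (d : AConf m n) : Prop :=
  ∀ s ∈ C, (∀ i, d (star m n s i) = η i) ∨ (∀ i, d (star m n s i) = !η i)

/-- The event `A^{η,ν}_C` that every vertex of `C` exhibits the type `η` or `ν`
or one of their total reversals. -/
def EventA2 (η ν : Fin 4 → Bool) (C : Finset (Vtx m n)) (d : AConf m n) : Prop :=
  ∀ s ∈ C, (∀ i, d (star m n s i) = η i) ∨ (∀ i, d (star m n s i) = !η i) ∨
    (∀ i, d (star m n s i) = ν i) ∨ (∀ i, d (star m n s i) = !ν i)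

/-- A non-contractible cycle of vertices of `C`: a cyclic sequence of vertices of `C`
whose consecutive vertices are nearest neighbours on the torus (with the actual
`ℤ²`-valued unit steps recorded), and whose winding number (the total displacement
in `ℤ²`) is nonzero. -/
structure NCCycle (C : Set (Vtx m n)) where
  len : ℕ
  len_pos : 0 < len
  v : ℕ → Vtx m n
  step : ℕ → ℤ × ℤ
  mem : ∀ i < len, v i ∈ C
  unit : ∀ i < len,
    step i = (1, 0) ∨ step i = (-1, 0) ∨ step i = (0, 1) ∨ step i = (0, -1)
  succ : ∀ i < len,
    v (i + 1) = ((v i).1 + ((step i).1 : ZMod m), (v i).2 + ((step i).2 : ZMod n))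
  closed : v len = v 0
  winding : ∑ i ∈ Finset.range len, step i ≠ 0

/-- Hypothesis (★): either `C` contains no non-contractible cycle, or every
non-contractible cycle in `C` has even length. -/
def StarHyp (C : Set (Vtx m n)) : Prop :=
  IsEmpty (NCCycle m n C) ∨ ∀ γ : NCCycle m n C, Even γ.len

section torusProb
variable [NeZero m] [NeZero n]

/-- The set `Δ_8vx` of eight-vertex configurations on the torus. -/
noncomputable def Δ8 : Finset (AConf m n) :=
  haveI := Classical.decPred (IsEightVertex m n)
  Finset.univ.filter (IsEightVertex m n)

/-- The uniform eight-vertex probability measure `μ`. -/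
noncomputable def prob (P : AConf m n → Prop) : ℝ :=
  haveI := Classical.decPred P
  (((Δ8 m n).filter P).card : ℝ) / ((Δ8 m n).card : ℝ)

end torusProb

/-- Spin configurations `Ω = {-1,+1}^E`. -/
abbrev SConf (m n : ℕ) := Edge m n → ℤˣ

section matrices
variable [NeZero m] [NeZero n]

/-- Real matrices indexed by the spin configurations (i.e. operators expressed in
the `σ³` product basis). -/
abbrev Mat (m n : ℕ) [NeZero m] [NeZero n] := Matrix (SConf m n) (SConf m n) ℝ

/-- The spin configuration `x^p`, equal to `-1` exactly on the edges of the face `p`. -/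
def xconf (p : Vtx m n) : SConf m n := fun e => if e ∈ faceSet m n p then -1 else 1

/-- The spin configuration equal to `-1` exactly on the edges of a set `A`. -/
def aconf (A : Finset (Edge m n)) : SConf m n := fun e => if e ∈ A then -1 else 1

/-- The plaquette operator `X_p = ∏_{e ∼ p} σ¹_e`: the permutation matrix flipping
the spins on the four edges of `p`. -/
def X (p : Vtx m n) : Mat m n := fun τ ω => if τ = xconf m n p * ω then 1 else 0

/-- `X_A = ∏_{e ∈ A} σ¹_e`: the permutation matrix flipping the spins on `A`. -/
def XA (A : Finset (Edge m n)) : Mat m n := fun τ ω => if τ = aconf m n A * ω then 1 else 0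

/-- The product `∏_{p ∈ C} X_p` of plaquette operators: the permutation matrix
flipping the spins around all faces of `C`. -/
def XProd (C : Finset (Vtx m n)) : Mat m n :=
  fun τ ω => if τ = (∏ p ∈ C, xconf m n p) * ω then 1 else 0

/-- The star operator `Z_s = ∏_{e ∼ s} σ³_e` (a diagonal matrix). -/
def Z (s : Vtx m n) : Mat m n :=
  Matrix.diagonal fun ω => (((∏ e ∈ starSet m n s, ω e : ℤˣ) : ℤ) : ℝ)

/-- `Z_A = ∏_{e ∈ A} σ³_e` (a diagonal matrix). -/
def ZA (A : Finset (Edge m n)) : Mat m n :=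
  Matrix.diagonal fun ω => (((∏ e ∈ A, ω e : ℤˣ) : ℤ) : ℝ)

/-- The product `∏_{s ∈ D} Z_s` of star operators (a diagonal matrix). -/
def ZProd (D : Finset (Vtx m n)) : Mat m n :=
  Matrix.diagonal fun ω => (((∏ s ∈ D, ∏ e ∈ starSet m n s, ω e : ℤˣ) : ℤ) : ℝ)

/-- The toric code Hamiltonian `H = -∑_p Jˣ_p X_p - ∑_s Jᶻ_s Z_s`. -/
noncomputable def H (Jx Jz : Vtx m n → ℝ) : Mat m n :=
  -∑ p : Vtx m n, Jx p • X m n p - ∑ s : Vtx m n, Jz s • Z m n s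

/-- Matrix exponential. -/
noncomputable def mexp (A : Mat m n) : Mat m n := NormedSpace.exp A

/-- The equilibrium state `⟨A⟩ = tr(A e^{-H}) / tr(e^{-H})`. -/
noncomputable def gibbs (Jx Jz : Vtx m n → ℝ) (A : Mat m n) : ℝ :=
  (A * mexp m n (-H m n Jx Jz)).trace / (mexp m n (-H m n Jx Jz)).trace

end matrices

/-- The scalar `I^ε_s(σ) = (1/16) ∏_{i=1}^4 (1 + ε_i σ_i(s))`. -/
noncomputable def Ifun (ε : Fin 4 → ℤˣ) (s : Vtx m n) (σ : SConf m n) : ℝ :=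
  (1 / 16 : ℝ) * ∏ i : Fin 4, (1 + ((ε i : ℤ) : ℝ) * ((σ (star m n s i) : ℤ) : ℝ))

/-- The scalar `Ī^ε_s(σ) = (1/16) ∏_{i=1}^4 (1 - ε_i σ_i(s))`. -/
noncomputable def Ibar (ε : Fin 4 → ℤˣ) (s : Vtx m n) (σ : SConf m n) : ℝ :=
  (1 / 16 : ℝ) * ∏ i : Fin 4, (1 - ((ε i : ℤ) : ℝ) * ((σ (star m n s i) : ℤ) : ℝ))

/-- `I^ε_C(σ) = ∏_{s ∈ C} (I^ε_s(σ) + Ī^ε_s(σ))`: the indicator that around every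
vertex of `C` the spins all agree with `ε` or are all opposite. -/
noncomputable def IC (ε : Fin 4 → ℤˣ) (C : Finset (Vtx m n)) (σ : SConf m n) : ℝ :=
  ∏ s ∈ C, (Ifun m n ε s σ + Ibar m n ε s σ)

/-- `I^{ε,δ}_C(σ) = ∏_{s ∈ C} (I^ε_s(σ) + Ī^ε_s(σ) + I^δ_s(σ) + Ī^δ_s(σ))`. -/
noncomputable def IC2 (ε δ : Fin 4 → ℤˣ) (C : Finset (Vtx m n)) (σ : SConf m n) : ℝ :=
  ∏ s ∈ C, (Ifun m n ε s σ + Ibar m n ε s σ + Ifun m n δ s σ + Ibar m n δ s σ)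

section matrices2
variable [NeZero m] [NeZero n]

/-- The (diagonal) operator `Q^ε_C = ∏_{s ∈ C} (P^ε_s + P̄^ε_s)`, where
`P^ε_s = (1/16) ∏_i (1 + ε_i σ³_i(s))` and `P̄^ε_s = (1/16) ∏_i (1 - ε_i σ³_i(s))`. -/
noncomputable def Q (ε : Fin 4 → ℤˣ) (C : Finset (Vtx m n)) : Mat m n :=
  Matrix.diagonal (IC m n ε C)

/-- The (diagonal) operator `Q^{ε,δ}_C = ∏_{s ∈ C} (P^ε_s + P̄^ε_s + P^δ_s + P̄^δ_s)`. -/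
noncomputable def Q2 (ε δ : Fin 4 → ℤˣ) (C : Finset (Vtx m n)) : Mat m n :=
  Matrix.diagonal (IC2 m n ε δ C)

/-- Expectation `E_J[f]` under the four-body Ising measure
`P_J(σ) ∝ exp(∑_s J_s ∏_{e ∼ s} σ_e)`. -/
noncomputable def isingE (J : Vtx m n → ℝ) (f : SConf m n → ℝ) : ℝ :=
  (∑ σ : SConf m n, f σ *
      Real.exp (∑ s : Vtx m n, J s * (((∏ e ∈ starSet m n s, σ e : ℤˣ) : ℤ) : ℝ))) /
    (∑ σ : SConf m n,
      Real.exp (∑ s : Vtx m n, J s * (((∏ e ∈ starSet m n s, σ e : ℤˣ) : ℤ) : ℝ)))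

end matrices2

end Toric

set_option linter.unusedSectionVars false

namespace ToricAux
open Toric

variable (m n : ℕ) [NeZero m] [NeZero n]

abbrev ES (m n : ℕ) := Edge m n → ZMod 2
abbrev VS (m n : ℕ) := Vtx m n → ZMod 2

/-- indicator vector of the four edges of face `p` -/
def xvec (p : Vtx m n) : ES m n := fun e => if e ∈ faceSet m n p then 1 else 0

def pvec (s : Vtx m n) : VS m n := Pi.single s 1

lemma one_ne_zero' (h : 2 ≤ m) : (1 : ZMod m) ≠ 0 := by
  haveI : Fact (1 < m) := ⟨by omega⟩
  exact one_ne_zero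

lemma succ_ne (h : 2 ≤ m) (a : ZMod m) : a + 1 ≠ a := by
  intro hh
  exact one_ne_zero' m h (by linear_combination hh)

lemma mem_faceSet (p : Vtx m n) (e : Edge m n) :
    e ∈ faceSet m n p ↔
      e = (p, true) ∨ e = (p, false) ∨ e = ((p.1, p.2 + 1), true) ∨ e = ((p.1 + 1, p.2), false) := by
  constructor
  · intro he
    simp only [faceSet, Finset.mem_image, Finset.mem_univ, true_and] at he
    obtain ⟨i, rfl⟩ := he
    fin_cases i <;> simp [faceEdge]
  · intro he
    simp only [faceSet, Finset.mem_image, Finset.mem_univ, true_and]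
    rcases he with rfl | rfl | rfl | rfl
    exacts [⟨0, rfl⟩, ⟨1, rfl⟩, ⟨2, rfl⟩, ⟨3, rfl⟩]

lemma star_injective (hm : 2 ≤ m) (hn : 2 ≤ n) (s : Vtx m n) :
    Function.Injective (star m n s) := by
  have h1 : s.1 - 1 ≠ s.1 := by
    intro h; exact one_ne_zero' m hm (by linear_combination -h)
  have h2 : s.2 - 1 ≠ s.2 := by
    intro h; exact one_ne_zero' n hn (by linear_combination -h)
  intro i j hij
  fin_cases i <;> fin_cases j <;> simp [Toric.star, Prod.ext_iff] at hij ⊢ <;>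
    first
      | exact absurd hij (one_ne_zero' m hm)
      | exact absurd hij (one_ne_zero' n hn)
      | exact absurd hij.symm (one_ne_zero' m hm)
      | exact absurd hij.symm (one_ne_zero' n hn)
      | exact absurd hij h1
      | exact absurd hij h2
      | exact absurd hij.symm h1
      | exact absurd hij.symm h2

lemma prod_starSet (hm : 2 ≤ m) (hn : 2 ≤ n) (s : Vtx m n) (σ : SConf m n) :
    ∏ e ∈ starSet m n s, σ e = ∏ i : Fin 4, σ (star m n s i) := by
  rw [starSet, Finset.prod_image]
  intro i _ j _ h
  exact star_injective m n hm hn s h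

lemma sum_starSet (hm : 2 ≤ m) (hn : 2 ≤ n) (s : Vtx m n) (x : ES m n) :
    ∑ e ∈ starSet m n s, x e = ∑ i : Fin 4, x (star m n s i) := by
  rw [starSet, Finset.sum_image]
  intro i _ j _ h
  exact star_injective m n hm hn s h

def dmap : ES m n →ₗ[ZMod 2] VS m n where
  toFun x := fun s => ∑ e ∈ starSet m n s, x e
  map_add' x y := by funext s; exact Finset.sum_add_distrib
  map_smul' c x := by funext s; simp [Finset.mul_sum]

lemma mem_faceSet_t (p v : Vtx m n) :
    ((v, true) : Edge m n) ∈ faceSet m n p ↔ v = p ∨ v = (p.1, p.2 + 1) := by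
  simp [mem_faceSet]

lemma mem_faceSet_f (p v : Vtx m n) :
    ((v, false) : Edge m n) ∈ faceSet m n p ↔ v = p ∨ v = (p.1 + 1, p.2) := by
  simp [mem_faceSet]

lemma ite_or {u w : Vtx m n} (huw : u ≠ w) (v : Vtx m n) :
    (if v = u ∨ v = w then (1 : ZMod 2) else 0)
      = (if v = u then 1 else 0) + (if v = w then 1 else 0) := by
  by_cases h1 : v = u <;> by_cases h2 : v = w <;> simp_all

lemma dmap_xvec (hm : 2 ≤ m) (hn : 2 ≤ n) (p : Vtx m n) :
    dmap m n (xvec m n p) = 0 := by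
  funext s
  show ∑ e ∈ starSet m n s, xvec m n p e = 0
  rw [sum_starSet m n hm hn s, Fin.sum_univ_four]
  simp only [Toric.star, Matrix.cons_val_zero, Matrix.cons_val_one, Matrix.head_cons,
    Matrix.cons_val_two, Matrix.tail_cons, Matrix.cons_val_three]
  simp only [xvec, mem_faceSet_t, mem_faceSet_f]
  obtain ⟨s1, s2⟩ := s
  obtain ⟨p1, p2⟩ := p
  simp only [Prod.mk.injEq, Prod.ext_iff, sub_eq_iff_eq_add]
  have hm1 : ∀ a : ZMod m, a + 1 ≠ a := succ_ne m hm
  have hn1 : ∀ b : ZMod n, b + 1 ≠ b := succ_ne n hn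
  by_cases hx1 : s1 = p1
  all_goals by_cases hx2 : s1 = p1 + 1
  all_goals by_cases hy1 : s2 = p2
  all_goals by_cases hy2 : s2 = p2 + 1
  all_goals try simp_all
  all_goals decide

def sumV : VS m n →ₗ[ZMod 2] ZMod 2 where
  toFun y := ∑ s, y s
  map_add' y z := Finset.sum_add_distrib
  map_smul' c y := by simp [Finset.mul_sum]

lemma add_self' (y : VS m n) : y + y = 0 := by
  funext s
  have : ∀ v : ZMod 2, v + v = 0 := by decide
  exact this (y s)

lemma add_cancel_mid (x y z : VS m n) : (x + y) + (y + z) = x + z := by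
  have h : (x + y) + (y + z) = x + ((y + y) + z) := by abel
  rw [h, add_self', zero_add]

lemma sumV_dmap (hm : 2 ≤ m) (hn : 2 ≤ n) (x : ES m n) :
    sumV m n (dmap m n x) = 0 := by
  show ∑ s : Vtx m n, ∑ e ∈ starSet m n s, x e = 0
  have h1 : ∀ s, ∑ e ∈ starSet m n s, x e = ∑ i : Fin 4, x (star m n s i) :=
    fun s => sum_starSet m n hm hn s x
  simp_rw [h1]
  rw [Finset.sum_comm, Fin.sum_univ_four]
  simp only [Toric.star, Matrix.cons_val_zero, Matrix.cons_val_one, Matrix.head_cons,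
    Matrix.cons_val_two, Matrix.tail_cons, Matrix.cons_val_three]
  have h3 : ∑ s : Vtx m n, x ((s.1 - 1, s.2), true) = ∑ s : Vtx m n, x (s, true) := by
    apply Fintype.sum_equiv ((Equiv.subRight (1 : ZMod m)).prodCongr (Equiv.refl (ZMod n)))
    intro s
    rfl
  have h4 : ∑ s : Vtx m n, x ((s.1, s.2 - 1), false) = ∑ s : Vtx m n, x (s, false) := by
    apply Fintype.sum_equiv ((Equiv.refl (ZMod m)).prodCongr (Equiv.subRight (1 : ZMod n)))
    intro s
    rfl
  rw [h3, h4]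
  have : ∀ a b : ZMod 2, a + b + a + b = 0 := by decide
  exact this _ _

lemma dmap_single_t (hm : 2 ≤ m) (hn : 2 ≤ n) (a : ZMod m) (b : ZMod n) :
    dmap m n (Pi.single ((a, b), true) 1) = pvec m n (a, b) + pvec m n (a + 1, b) := by
  funext s
  show ∑ e ∈ starSet m n s, _ = _
  rw [sum_starSet m n hm hn s, Fin.sum_univ_four]
  simp only [Toric.star, Matrix.cons_val_zero, Matrix.cons_val_one, Matrix.head_cons,
    Matrix.cons_val_two, Matrix.tail_cons, Matrix.cons_val_three]
  obtain ⟨s1, s2⟩ := s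
  simp only [pvec, Pi.add_apply, Pi.single_apply, Prod.mk.injEq, Prod.ext_iff,
    sub_eq_iff_eq_add]
  have hm1 : ∀ c : ZMod m, c + 1 ≠ c := succ_ne m hm
  by_cases h1 : s1 = a <;> by_cases h2 : s1 = a + 1 <;> by_cases h3 : s2 = b <;>
    (try simp_all [sub_eq_iff_eq_add]) <;> (try decide)

lemma dmap_single_f (hm : 2 ≤ m) (hn : 2 ≤ n) (a : ZMod m) (b : ZMod n) :
    dmap m n (Pi.single ((a, b), false) 1) = pvec m n (a, b) + pvec m n (a, b + 1) := by
  funext s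
  show ∑ e ∈ starSet m n s, _ = _
  rw [sum_starSet m n hm hn s, Fin.sum_univ_four]
  simp only [Toric.star, Matrix.cons_val_zero, Matrix.cons_val_one, Matrix.head_cons,
    Matrix.cons_val_two, Matrix.tail_cons, Matrix.cons_val_three]
  obtain ⟨s1, s2⟩ := s
  simp only [pvec, Pi.add_apply, Pi.single_apply, Prod.mk.injEq, Prod.ext_iff,
    sub_eq_iff_eq_add]
  have hn1 : ∀ c : ZMod n, c + 1 ≠ c := succ_ne n hn
  by_cases h1 : s2 = b <;> by_cases h2 : s2 = b + 1 <;> by_cases h3 : s1 = a <;>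
    (try simp_all [sub_eq_iff_eq_add]) <;> (try decide)

lemma pair_mem_h (hm : 2 ≤ m) (hn : 2 ≤ n) (a a' : ZMod m) (b : ZMod n) :
    pvec m n (a, b) + pvec m n (a', b) ∈ LinearMap.range (dmap m n) := by
  have key : ∀ k : ℕ, ∀ a : ZMod m,
      pvec m n (a, b) + pvec m n (a + (k : ZMod m), b) ∈ LinearMap.range (dmap m n) := by
    intro k
    induction k with
    | zero =>
        intro a
        simp only [Nat.cast_zero, add_zero]
        rw [add_self']
        exact Submodule.zero_mem _
    | succ k ih =>
        intro a
        have hc : (((k : ℕ) + 1 : ℕ) : ZMod m) = (k : ZMod m) + 1 := by push_cast; ring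
        rw [hc, ← add_assoc]
        have h2 : pvec m n (a + (k : ZMod m), b) + pvec m n (a + (k : ZMod m) + 1, b)
            ∈ LinearMap.range (dmap m n) :=
          ⟨Pi.single ((a + (k : ZMod m), b), true) 1, dmap_single_t m n hm hn _ _⟩
        have := Submodule.add_mem _ (ih a) h2
        rwa [add_cancel_mid] at this
  have ha : a' = a + ((a' - a).val : ZMod m) := by
    rw [ZMod.natCast_val, ZMod.cast_id]
    ring
  rw [ha]
  exact key _ a

lemma pair_mem_v (hm : 2 ≤ m) (hn : 2 ≤ n) (a : ZMod m) (b b' : ZMod n) :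
    pvec m n (a, b) + pvec m n (a, b') ∈ LinearMap.range (dmap m n) := by
  have key : ∀ k : ℕ, ∀ b : ZMod n,
      pvec m n (a, b) + pvec m n (a, b + (k : ZMod n)) ∈ LinearMap.range (dmap m n) := by
    intro k
    induction k with
    | zero =>
        intro b
        simp only [Nat.cast_zero, add_zero]
        rw [add_self']
        exact Submodule.zero_mem _
    | succ k ih =>
        intro b
        have hc : (((k : ℕ) + 1 : ℕ) : ZMod n) = (k : ZMod n) + 1 := by push_cast; ring
        rw [hc, ← add_assoc]
        have h2 : pvec m n (a, b + (k : ZMod n)) + pvec m n (a, b + (k : ZMod n) + 1)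
            ∈ LinearMap.range (dmap m n) :=
          ⟨Pi.single ((a, b + (k : ZMod n)), false) 1, dmap_single_f m n hm hn _ _⟩
        have := Submodule.add_mem _ (ih b) h2
        rwa [add_cancel_mid] at this
  have hb : b' = b + ((b' - b).val : ZMod n) := by
    rw [ZMod.natCast_val, ZMod.cast_id]
    ring
  rw [hb]
  exact key _ b

lemma pair_mem (hm : 2 ≤ m) (hn : 2 ≤ n) (s t : Vtx m n) :
    pvec m n s + pvec m n t ∈ LinearMap.range (dmap m n) := by
  have h1 := pair_mem_h m n hm hn s.1 t.1 s.2
  have h2 := pair_mem_v m n hm hn t.1 s.2 t.2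
  have := Submodule.add_mem _ h1 h2
  rwa [add_cancel_mid] at this

lemma range_dmap (hm : 2 ≤ m) (hn : 2 ≤ n) :
    LinearMap.range (dmap m n) = LinearMap.ker (sumV m n) := by
  apply le_antisymm
  · rintro y ⟨x, rfl⟩
    exact LinearMap.mem_ker.2 (sumV_dmap m n hm hn x)
  · intro y hy
    have hy' : ∑ s : Vtx m n, y s = 0 := hy
    have hrep : y = ∑ s : Vtx m n, y s • (pvec m n s + pvec m n (0, 0)) := by
      have e1 : ∑ s : Vtx m n, y s • (pvec m n s + pvec m n (0, 0))
          = ∑ s : Vtx m n, y s • pvec m n s + (∑ s : Vtx m n, y s) • pvec m n (0, 0) := by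
        rw [Finset.sum_smul, ← Finset.sum_add_distrib]
        refine Finset.sum_congr rfl fun s _ => ?_
        rw [smul_add]
      have e2 : ∑ s : Vtx m n, y s • pvec m n s = y := by
        funext t
        simp [pvec, Pi.single_apply, Finset.sum_apply]
      rw [e1, e2, hy', zero_smul, add_zero]
    rw [hrep]
    exact Submodule.sum_mem _ fun s _ =>
      Submodule.smul_mem _ _ (pair_mem m n hm hn s (0, 0))

def cvec : VS m n := fun _ => 1

def bd : VS m n →ₗ[ZMod 2] ES m n :=
  Fintype.linearCombination (ZMod 2) (xvec m n)

lemma ite_or_c {u w : Vtx m n} (huw : u ≠ w) (c : VS m n) (p : Vtx m n) :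
    (if p = u ∨ p = w then c p else 0)
      = (if p = u then c p else 0) + (if p = w then c p else 0) := by
  by_cases h1 : p = u <;> by_cases h2 : p = w <;> simp_all

lemma bd_apply (c : VS m n) (e : Edge m n) :
    bd m n c e = ∑ p : Vtx m n, if e ∈ faceSet m n p then c p else 0 := by
  show (∑ p : Vtx m n, c p • xvec m n p) e = _
  rw [Finset.sum_apply]
  refine Finset.sum_congr rfl fun p _ => ?_
  simp [xvec, mul_ite]

lemma mem_faceSet_t' (hn : 2 ≤ n) (a : ZMod m) (b : ZMod n) (p : Vtx m n) :
    (((a, b), true) : Edge m n) ∈ faceSet m n p ↔ p = (a, b) ∨ p = (a, b - 1) := by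
  rw [mem_faceSet_t]
  constructor
  · rintro (h | h)
    · exact Or.inl (by rw [← h])
    · refine Or.inr ?_
      have h1 : a = p.1 := congrArg Prod.fst h
      have h2 : b = p.2 + 1 := congrArg Prod.snd h
      have : p.2 = b - 1 := by rw [h2]; ring
      exact Prod.ext h1.symm this
  · rintro (rfl | rfl)
    · exact Or.inl rfl
    · exact Or.inr (Prod.ext rfl (by ring))

lemma mem_faceSet_f' (hm : 2 ≤ m) (a : ZMod m) (b : ZMod n) (p : Vtx m n) :
    (((a, b), false) : Edge m n) ∈ faceSet m n p ↔ p = (a, b) ∨ p = (a - 1, b) := by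
  rw [mem_faceSet_f]
  constructor
  · rintro (h | h)
    · exact Or.inl (by rw [← h])
    · refine Or.inr ?_
      have h1 : a = p.1 + 1 := congrArg Prod.fst h
      have h2 : b = p.2 := congrArg Prod.snd h
      have : p.1 = a - 1 := by rw [h1]; ring
      exact Prod.ext this h2.symm
  · rintro (rfl | rfl)
    · exact Or.inl rfl
    · exact Or.inr (Prod.ext (by ring) rfl)

lemma bd_apply_t (hn : 2 ≤ n) (c : VS m n) (a : ZMod m) (b : ZMod n) :
    bd m n c ((a, b), true) = c (a, b) + c (a, b - 1) := by
  rw [bd_apply]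
  have hne : ((a, b) : Vtx m n) ≠ (a, b - 1) := by
    intro h
    have := congrArg Prod.snd h
    simp only at this
    exact succ_ne n hn (b - 1) (by linear_combination this)
  simp only [mem_faceSet_t' m n hn a b]
  rw [Finset.sum_congr rfl fun p _ => ite_or_c m n hne c p, Finset.sum_add_distrib,
    Finset.sum_ite_eq', Finset.sum_ite_eq']
  simp

lemma bd_apply_f (hm : 2 ≤ m) (c : VS m n) (a : ZMod m) (b : ZMod n) :
    bd m n c ((a, b), false) = c (a, b) + c (a - 1, b) := by
  rw [bd_apply]
  have hne : ((a, b) : Vtx m n) ≠ (a - 1, b) := by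
    intro h
    have := congrArg Prod.fst h
    simp only at this
    exact succ_ne m hm (a - 1) (by linear_combination this)
  simp only [mem_faceSet_f' m n hm a b]
  rw [Finset.sum_congr rfl fun p _ => ite_or_c m n hne c p, Finset.sum_add_distrib,
    Finset.sum_ite_eq', Finset.sum_ite_eq']
  simp

lemma zmod2_eq_of_add_eq_zero : ∀ x y : ZMod 2, x + y = 0 → x = y := by decide

lemma ker_bd (hm : 2 ≤ m) (hn : 2 ≤ n) :
    LinearMap.ker (bd m n) = Submodule.span (ZMod 2) {cvec m n} := by
  apply le_antisymm
  · intro c hc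
    have hc0 : bd m n c = 0 := hc
    have hH : ∀ (a : ZMod m) (b : ZMod n), c (a, b) = c (a, b - 1) := by
      intro a b
      apply zmod2_eq_of_add_eq_zero
      rw [← bd_apply_t m n hn c a b, hc0]
      rfl
    have hV : ∀ (a : ZMod m) (b : ZMod n), c (a, b) = c (a - 1, b) := by
      intro a b
      apply zmod2_eq_of_add_eq_zero
      rw [← bd_apply_f m n hm c a b, hc0]
      rfl
    have stepH : ∀ (a : ZMod m) (b : ZMod n), c (a, b + 1) = c (a, b) := by
      intro a b
      have := hH a (b + 1)
      rwa [add_sub_cancel_right] at this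
    have stepV : ∀ (a : ZMod m) (b : ZMod n), c (a + 1, b) = c (a, b) := by
      intro a b
      have := hV (a + 1) b
      rwa [add_sub_cancel_right] at this
    have claimV : ∀ (l : ℕ) (a : ZMod m), c (a, (l : ZMod n)) = c (a, 0) := by
      intro l
      induction l with
      | zero => intro a; norm_num
      | succ l ih =>
          intro a
          have hc' : ((l + 1 : ℕ) : ZMod n) = (l : ZMod n) + 1 := by push_cast; ring
          rw [hc', stepH, ih]
    have claimH : ∀ (k : ℕ), c ((k : ZMod m), 0) = c (0, 0) := by
      intro k
      induction k with
      | zero => norm_num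
      | succ k ih =>
          have hc' : ((k + 1 : ℕ) : ZMod m) = (k : ZMod m) + 1 := by push_cast; ring
          rw [hc', stepV, ih]
    have hconst : ∀ s : Vtx m n, c s = c (0, 0) := by
      intro s
      have h1 : s = ((s.1.val : ZMod m), (s.2.val : ZMod n)) := by
        rw [ZMod.natCast_val, ZMod.cast_id, ZMod.natCast_val, ZMod.cast_id]
      rw [h1, claimV, claimH]
    apply Submodule.mem_span_singleton.2
    exact ⟨c (0, 0), by funext s; simp [cvec, hconst s, mul_comm]⟩
  · rw [Submodule.span_le, Set.singleton_subset_iff]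
    have : bd m n (cvec m n) = 0 := by
      funext e
      obtain ⟨⟨a, b⟩, t⟩ := e
      cases t
      · rw [bd_apply_f m n hm]; show (1 + 1 : ZMod 2) = 0; decide
      · rw [bd_apply_t m n hn]; show (1 + 1 : ZMod 2) = 0; decide
    exact this

lemma cvec_ne_zero : cvec m n ≠ 0 := by
  intro h
  have h0 := congrFun h ((0 : ZMod m), (0 : ZMod n))
  have : (1 : ZMod 2) = 0 := h0
  exact absurd this (by decide)

lemma finrank_VS : Module.finrank (ZMod 2) (VS m n) = m * n := by
  rw [Module.finrank_fintype_fun_eq_card, Fintype.card_prod, ZMod.card, ZMod.card]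

lemma finrank_ES : Module.finrank (ZMod 2) (ES m n) = 2 * (m * n) := by
  rw [Module.finrank_fintype_fun_eq_card, Fintype.card_prod, Fintype.card_prod,
    ZMod.card, ZMod.card, Fintype.card_bool]
  ring

lemma range_bd : LinearMap.range (bd m n) = Submodule.span (ZMod 2) (Set.range (xvec m n)) :=
  Fintype.range_linearCombination (ZMod 2) (xvec m n)

lemma finrank_span_xvec (hm : 2 ≤ m) (hn : 2 ≤ n) :
    Module.finrank (ZMod 2) (Submodule.span (ZMod 2) (Set.range (xvec m n))) = m * n - 1 := by
  have h1 := LinearMap.finrank_range_add_finrank_ker (bd m n)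
  rw [ker_bd m n hm hn, range_bd, finrank_VS] at h1
  have h2 : Module.finrank (ZMod 2) ↥(Submodule.span (ZMod 2) {cvec m n}) = 1 :=
    finrank_span_singleton (cvec_ne_zero m n)
  have hmn : 2 * 2 ≤ m * n := Nat.mul_le_mul hm hn
  omega

lemma sumV_pvec (u : Vtx m n) : sumV m n (pvec m n u) = 1 := by
  show ∑ s : Vtx m n, pvec m n u s = 1
  simp [pvec, Pi.single_apply, Finset.sum_ite_eq']

lemma sumV_surj : Function.Surjective (sumV m n) := by
  intro k
  refine ⟨k • pvec m n ((0 : ZMod m), (0 : ZMod n)), ?_⟩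
  rw [map_smul, sumV_pvec, smul_eq_mul, mul_one]

lemma finrank_ker_dmap (hm : 2 ≤ m) (hn : 2 ≤ n) :
    Module.finrank (ZMod 2) (LinearMap.ker (dmap m n)) = m * n + 1 := by
  have h1 := LinearMap.finrank_range_add_finrank_ker (dmap m n)
  rw [range_dmap m n hm hn, finrank_ES] at h1
  have h2 := LinearMap.finrank_range_add_finrank_ker (sumV m n)
  rw [finrank_VS] at h2
  have h3 : LinearMap.range (sumV m n) = ⊤ := LinearMap.range_eq_top.2 (sumV_surj m n)
  rw [h3] at h2
  have h4 : Module.finrank (ZMod 2) ↥(⊤ : Submodule (ZMod 2) (ZMod 2)) = 1 := by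
    rw [finrank_top, Module.finrank_self]
  have hmn : 2 * 2 ≤ m * n := Nat.mul_le_mul hm hn
  omega

lemma card_ker_dmap (hm : 2 ≤ m) (hn : 2 ≤ n) :
    Nat.card (LinearMap.ker (dmap m n)) = 2 ^ (m * n + 1) := by
  haveI : Fintype ↥(LinearMap.ker (dmap m n)) := Fintype.ofFinite _
  rw [Nat.card_eq_fintype_card, Module.card_eq_pow_finrank (K := ZMod 2), ZMod.card,
    finrank_ker_dmap m n hm hn]

lemma card_span_xvec (hm : 2 ≤ m) (hn : 2 ≤ n) :
    Nat.card (Submodule.span (ZMod 2) (Set.range (xvec m n))) = 2 ^ (m * n - 1) := by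
  haveI : Fintype ↥(Submodule.span (ZMod 2) (Set.range (xvec m n))) := Fintype.ofFinite _
  rw [Nat.card_eq_fintype_card, Module.card_eq_pow_finrank (K := ZMod 2), ZMod.card,
    finrank_span_xvec m n hm hn]

/-! ### Transfer between `ℤˣ` and `ZMod 2` -/

def sgn : ℤˣ → ZMod 2 := fun u => if u = 1 then 0 else 1

lemma sgn_mul : ∀ u v : ℤˣ, sgn (u * v) = sgn u + sgn v := by decide

lemma sgn_eq_zero_iff : ∀ u : ℤˣ, sgn u = 0 ↔ u = 1 := by decide

lemma zmod2_cases : ∀ c : ZMod 2, c = 0 ∨ c = 1 := by decide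

def psi : SConf m n ≃ ES m n where
  toFun σ := fun e => sgn (σ e)
  invFun x := fun e => if x e = 0 then 1 else -1
  left_inv σ := by
    funext e
    change (if sgn (σ e) = 0 then 1 else -1) = σ e
    rcases Int.units_eq_one_or (σ e) with h | h <;> rw [h] <;> decide
  right_inv x := by
    funext e
    have : ∀ v : ZMod 2, sgn (if v = 0 then 1 else -1) = v := by decide
    exact this (x e)

lemma psi_mul (σ τ : SConf m n) : psi m n (σ * τ) = psi m n σ + psi m n τ :=
  funext fun e => sgn_mul (σ e) (τ e)

lemma psi_one : psi m n 1 = 0 := by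
  funext e
  show sgn 1 = 0
  decide

lemma mul_self'' (σ : SConf m n) : σ * σ = 1 :=
  funext fun e => Int.units_mul_self (σ e)

lemma inv_eq_self (σ : SConf m n) : σ⁻¹ = σ :=
  inv_eq_of_mul_eq_one_right (mul_self'' m n σ)

lemma psi_xconf (p : Vtx m n) : psi m n (xconf m n p) = xvec m n p := by
  funext e
  show sgn (if e ∈ faceSet m n p then -1 else 1) = xvec m n p e
  by_cases h : e ∈ faceSet m n p <;> simp [h, xvec] <;> decide

lemma sgn_prod (t : Finset (Edge m n)) (σ : SConf m n) :
    sgn (∏ e ∈ t, σ e) = ∑ e ∈ t, sgn (σ e) := by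
  classical
  induction t using Finset.induction_on with
  | empty => simpa using (by decide : sgn 1 = 0)
  | insert a t h ih =>
      rw [Finset.prod_insert h, Finset.sum_insert h, sgn_mul, ih]

/-- The eight-vertex set as a set of spin configurations. -/
def Om8 : Set (SConf m n) := {σ | ∀ s : Vtx m n, (∏ e ∈ starSet m n s, σ e) = 1}

lemma mem_Om8_iff (σ : SConf m n) : σ ∈ Om8 m n ↔ dmap m n (psi m n σ) = 0 := by
  constructor
  · intro hσ
    funext s
    show ∑ e ∈ starSet m n s, sgn (σ e) = 0
    rw [← sgn_prod, hσ s]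
    decide
  · intro h s
    have hs : ∑ e ∈ starSet m n s, sgn (σ e) = 0 := congrFun h s
    rw [← sgn_prod] at hs
    exact (sgn_eq_zero_iff _).1 hs

lemma psi_image_Om8 :
    psi m n '' Om8 m n = ↑(LinearMap.ker (dmap m n)) := by
  rw [Equiv.image_eq_preimage_symm]
  ext x
  simp only [Set.mem_preimage, SetLike.mem_coe, LinearMap.mem_ker]
  rw [mem_Om8_iff m n ((psi m n).symm x), Equiv.apply_symm_apply]

lemma psi_image_G :
    psi m n '' ↑(Subgroup.closure (Set.range (xconf m n)))
      = ↑(Submodule.span (ZMod 2) (Set.range (xvec m n))) := by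
  have key2 : ∀ σ, σ ∈ Subgroup.closure (Set.range (xconf m n)) →
      psi m n σ ∈ Submodule.span (ZMod 2) (Set.range (xvec m n)) := by
    intro σ hσ
    induction hσ using Subgroup.closure_induction with
    | mem x h =>
        obtain ⟨p, rfl⟩ := h
        rw [psi_xconf]
        exact Submodule.subset_span ⟨p, rfl⟩
    | one =>
        rw [psi_one]
        exact Submodule.zero_mem _
    | mul x y hx hy ihx ihy =>
        rw [psi_mul]
        exact Submodule.add_mem _ ihx ihy
    | inv x hx ih =>
        rwa [inv_eq_self]
  have key : ∀ x : ES m n, x ∈ Submodule.span (ZMod 2) (Set.range (xvec m n)) →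
      ∃ σ ∈ Subgroup.closure (Set.range (xconf m n)), psi m n σ = x := by
    intro x hx
    induction hx using Submodule.span_induction with
    | mem x h =>
        obtain ⟨p, rfl⟩ := h
        exact ⟨xconf m n p, Subgroup.subset_closure ⟨p, rfl⟩, psi_xconf m n p⟩
    | zero => exact ⟨1, Subgroup.one_mem _, psi_one m n⟩
    | add x y hx hy ihx ihy =>
        obtain ⟨σ, hσ, rfl⟩ := ihx
        obtain ⟨τ, hτ, rfl⟩ := ihy
        exact ⟨σ * τ, Subgroup.mul_mem _ hσ hτ, psi_mul m n σ τ⟩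
    | smul c x hx ih =>
        obtain ⟨σ, hσ, rfl⟩ := ih
        rcases zmod2_cases c with rfl | rfl
        · refine ⟨1, Subgroup.one_mem _, ?_⟩
          rw [psi_one, zero_smul]
        · exact ⟨σ, hσ, by rw [one_smul]⟩
  apply Set.Subset.antisymm
  · rintro _ ⟨σ, hσ, rfl⟩
    exact key2 σ hσ
  · intro x hx
    obtain ⟨σ, hσ, rfl⟩ := key x hx
    exact ⟨σ, hσ, rfl⟩

/-! ### The eight-vertex subgroup and cardinalities -/

def Om8sub : Subgroup (SConf m n) where
  carrier := Om8 m n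
  mul_mem' := by
    intro σ τ hσ hτ
    intro s
    show ∏ e ∈ starSet m n s, (σ e * τ e) = 1
    rw [Finset.prod_mul_distrib, hσ s, hτ s, mul_one]
  one_mem' := by
    intro s
    exact Finset.prod_const_one
  inv_mem' := by
    intro σ hσ
    show σ⁻¹ ∈ Om8 m n
    rw [inv_eq_self]
    exact hσ

lemma closure_le_Om8sub (hm : 2 ≤ m) (hn : 2 ≤ n) :
    Subgroup.closure (Set.range (xconf m n)) ≤ Om8sub m n := by
  rw [Subgroup.closure_le]
  rintro _ ⟨p, rfl⟩
  show xconf m n p ∈ Om8 m n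
  rw [mem_Om8_iff, psi_xconf]
  exact dmap_xvec m n hm hn p

lemma ncard_Om8 (hm : 2 ≤ m) (hn : 2 ≤ n) : (Om8 m n).ncard = 2 ^ (m * n + 1) := by
  rw [← Set.ncard_image_of_injective (Om8 m n) (psi m n).injective, psi_image_Om8,
    ← Nat.card_coe_set_eq]
  exact card_ker_dmap m n hm hn

lemma ncard_G (hm : 2 ≤ m) (hn : 2 ≤ n) :
    (↑(Subgroup.closure (Set.range (xconf m n))) : Set (SConf m n)).ncard
      = 2 ^ (m * n - 1) := by
  rw [← Set.ncard_image_of_injective _ (psi m n).injective, psi_image_G,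
    ← Nat.card_coe_set_eq]
  exact card_span_xvec m n hm hn

end ToricAux


/-- The subgroup of `({±1}^E, ·)` generated by the plaquette flips
`{x^p : p ∈ F}` acts on `Ω_8vx` by componentwise multiplication with exactly four
orbits, each of cardinality `2^{mn-1}`. -/
theorem plaquette_flip_orbits (m n : ℕ) [NeZero m] [NeZero n]
    (hm : 3 ≤ m) (hn : 3 ≤ n) :
    let Ω8 : Set (Toric.SConf m n) :=
      {σ | ∀ s : Toric.Vtx m n, (∏ e ∈ Toric.starSet m n s, σ e) = 1}
    let G' : Subgroup (Toric.SConf m n) := Subgroup.closure (Set.range (Toric.xconf m n))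
    let orbit : Toric.SConf m n → Set (Toric.SConf m n) :=
      fun σ => {τ | τ ∈ Ω8 ∧ ∃ g ∈ G', τ = g * σ}
    {A : Set (Toric.SConf m n) | ∃ σ ∈ Ω8, A = orbit σ}.ncard = 4 ∧
      ∀ σ ∈ Ω8, (orbit σ).ncard = 2 ^ (m * n - 1) := by
  intro Ω8 G' orbit
  have hm2 : 2 ≤ m := by omega
  have hn2 : 2 ≤ n := by omega
  have hle : G' ≤ ToricAux.Om8sub m n := ToricAux.closure_le_Om8sub m n hm2 hn2
  have horb : ∀ σ, σ ∈ Ω8 → orbit σ = (fun g => g * σ) '' (↑G' : Set (Toric.SConf m n)) := by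
    intro σ hσ
    ext τ
    constructor
    · rintro ⟨hτ, g, hg, rfl⟩
      exact ⟨g, hg, rfl⟩
    · rintro ⟨g, hg, rfl⟩
      exact ⟨(ToricAux.Om8sub m n).mul_mem (hle hg) hσ, g, hg, rfl⟩
  have part2 : ∀ σ ∈ Ω8, (orbit σ).ncard = 2 ^ (m * n - 1) := by
    intro σ hσ
    rw [horb σ hσ, Set.ncard_image_of_injective _ (mul_left_injective σ)]
    exact ToricAux.ncard_G m n hm2 hn2
  refine ⟨?_, part2⟩
  have horb_eq : ∀ (σ : Toric.SConf m n), σ ∈ Ω8 → ∀ g ∈ G', orbit σ = orbit (g * σ) := by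
    intro σ hσ g hg
    have hgσ : g * σ ∈ Ω8 := (ToricAux.Om8sub m n).mul_mem (hle hg) hσ
    rw [horb σ hσ, horb (g * σ) hgσ]
    ext ρ
    constructor
    · rintro ⟨h, hh, rfl⟩
      refine ⟨h * g, G'.mul_mem hh hg, ?_⟩
      show h * g * (g * σ) = h * σ
      rw [mul_assoc, ← mul_assoc g g σ, ToricAux.mul_self'', one_mul]
    · rintro ⟨h, hh, rfl⟩
      refine ⟨h * g, G'.mul_mem hh hg, ?_⟩
      show h * g * σ = h * (g * σ)
      rw [mul_assoc]
  classical
  let H : Subgroup (ToricAux.Om8sub m n) := G'.subgroupOf (ToricAux.Om8sub m n)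
  let Fbar : (ToricAux.Om8sub m n ⧸ H) → Set (Toric.SConf m n) :=
    Quotient.lift (fun a : ToricAux.Om8sub m n => orbit ↑a) (by
      intro a b hab
      have h1 : a⁻¹ * b ∈ H := QuotientGroup.leftRel_apply.mp hab
      have h2 : ((a⁻¹ * b : ToricAux.Om8sub m n) : Toric.SConf m n) ∈ G' :=
        Subgroup.mem_subgroupOf.mp h1
      have h3 : ((b : ToricAux.Om8sub m n) : Toric.SConf m n)
          = ((a⁻¹ * b : ToricAux.Om8sub m n) : Toric.SConf m n) * ↑a := by
        show (b : Toric.SConf m n) = ((a : Toric.SConf m n)⁻¹ * ↑b) * ↑a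
        rw [ToricAux.inv_eq_self m n (↑a : Toric.SConf m n),
          mul_comm ((a : ToricAux.Om8sub m n) : Toric.SConf m n) (↑b : Toric.SConf m n),
          mul_assoc, ToricAux.mul_self'' m n, mul_one]
      show orbit ↑a = orbit ↑b
      rw [horb_eq (↑a) a.2 _ h2, ← h3])
  have hFinj : Function.Injective Fbar := by
    intro q1 q2
    refine Quotient.inductionOn₂ q1 q2 ?_
    intro a b h
    have h' : orbit ↑a = orbit ↑b := h
    have hbb : (↑b : Toric.SConf m n) ∈ orbit ↑b := ⟨b.2, 1, G'.one_mem, (one_mul _).symm⟩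
    rw [← h'] at hbb
    obtain ⟨-, g, hg, hgb⟩ := hbb
    show (QuotientGroup.mk a : ToricAux.Om8sub m n ⧸ H) = QuotientGroup.mk b
    refine (QuotientGroup.eq).mpr (Subgroup.mem_subgroupOf.mpr ?_)
    show ((a : Toric.SConf m n))⁻¹ * ↑b ∈ G'
    rw [ToricAux.inv_eq_self, hgb]
    have hgg : (↑a : Toric.SConf m n) * (g * ↑a) = g := by
      rw [mul_left_comm, ToricAux.mul_self'', mul_one]
    rw [hgg]
    exact hg
  have hS : {A : Set (Toric.SConf m n) | ∃ σ ∈ Ω8, A = orbit σ} = Set.range Fbar := by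
    ext A
    constructor
    · rintro ⟨σ, hσ, rfl⟩
      exact ⟨QuotientGroup.mk ⟨σ, hσ⟩, rfl⟩
    · rintro ⟨q, rfl⟩
      refine Quotient.inductionOn q ?_
      intro a
      exact ⟨↑a, a.2, rfl⟩
  -- cardinalities
  have e1 : Nat.card (ToricAux.Om8sub m n) = 2 ^ (m * n + 1) := by
    have h0 : Nat.card (ToricAux.Om8sub m n) = (ToricAux.Om8 m n).ncard := by
      rw [← Nat.card_coe_set_eq]
      rfl
    rw [h0, ToricAux.ncard_Om8 m n hm2 hn2]
  have e2 : Nat.card H = 2 ^ (m * n - 1) := by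
    have h0 : Nat.card H = Nat.card G' :=
      Nat.card_congr (Subgroup.subgroupOfEquivOfLe hle).toEquiv
    have h1 : Nat.card G' = (↑G' : Set (Toric.SConf m n)).ncard := by
      rw [← Nat.card_coe_set_eq]
      rfl
    rw [h0, h1, ToricAux.ncard_G m n hm2 hn2]
  have e3 := Subgroup.card_eq_card_quotient_mul_card_subgroup H
  rw [e1, e2] at e3
  have e4 : Nat.card (ToricAux.Om8sub m n ⧸ H) = 4 := by
    have hpow : 2 ^ (m * n + 1) = 4 * 2 ^ (m * n - 1) := by
      have h9 : 1 ≤ m * n := Nat.one_le_iff_ne_zero.mpr (by positivity)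
      rw [show m * n + 1 = 2 + (m * n - 1) by omega, pow_add]
      norm_num
    rw [hpow] at e3
    exact Nat.eq_of_mul_eq_mul_right (pow_pos (by norm_num) _) e3.symm
  rw [hS, ← Nat.card_coe_set_eq]
  rw [Nat.card_congr (Equiv.ofInjective Fbar hFinj).symm]
  exact e4
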